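/- Conversely, in the 3-SAT reduction graph of Theorem 1, if there exist an s-f path P_1 of cost 3m + n traversing one side of every lobe and an arc-disjoint s-f path P_2 of cost 0, then the assignment τ defined by τ(x_i) = true iff P_1 traverses the lower part of lobe i satisfies every clause of F; hence F is satisfiable. -/

import Mathlib

/-- Nodes of the 3-SAT reduction graph of Theorem 1: `w 0 = s`, …,
`w n = f` separate the `n` variable lobes; `u j t b` / `v j t b` are the
endpoints of the segment of the occurrence (clause `j`, slot `t`) on side `b`
of its lobe (side `true` = upper/positive-literal side, side `false` =
lower/negated-literal side); `y j`, `z j` are the clause nodes. -/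
inductive RNode (n m : ℕ) : Type
  | w : Fin (n + 1) → RNode n m
  | u : Fin m → Fin 3 → Bool → RNode n m
  | v : Fin m → Fin 3 → Bool → RNode n m
  | y : Fin m → RNode n m
  | z : Fin m → RNode n m
  deriving DecidableEq

/-- The occurrences (clause, slot) of variable `i`, in a fixed order. -/
def occList {n m : ℕ} (Cl : Fin m → Fin 3 → Fin n × Bool) (i : Fin n) :
    List (Fin m × Fin 3) :=
  ((List.finRange m).flatMap fun j => (List.finRange 3).map fun t => (j, t)).filter
    fun p => decide ((Cl p.1 p.2).1 = i)

/-- Arcs of the reduction graph: each lobe `i` chains, on each of its two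
sides, the segments of the occurrences of variable `i` from `w i` to
`w (i+1)`; the clause chain `s → y 0 → … → z (m-1) → f` with connectors from
`y j` to (and from `v` back to `z j` of) the occurrence segment lying on the
side matching the literal's polarity `(Cl j t).2`. -/
inductive RArc {n m : ℕ} (Cl : Fin m → Fin 3 → Fin n × Bool) :
    RNode n m → RNode n m → Prop
  | entry (i : Fin n) (side : Bool) (j : Fin m) (t : Fin 3)
      (h : (occList Cl i).head? = some (j, t)) :
      RArc Cl (.w i.castSucc) (.u j t side)
  | seg (j : Fin m) (t : Fin 3) (side : Bool) :
      RArc Cl (.u j t side) (.v j t side)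
  | chain (i : Fin n) (side : Bool) (j : Fin m) (t : Fin 3) (j' : Fin m)
      (t' : Fin 3) (q : ℕ) (h1 : (occList Cl i)[q]? = some (j, t))
      (h2 : (occList Cl i)[q + 1]? = some (j', t')) :
      RArc Cl (.v j t side) (.u j' t' side)
  | exits (i : Fin n) (side : Bool) (j : Fin m) (t : Fin 3)
      (h : (occList Cl i).getLast? = some (j, t)) :
      RArc Cl (.v j t side) (.w i.succ)
  | sy (j : Fin m) (h : (j : ℕ) = 0) : RArc Cl (.w 0) (.y j)
  | zy (j j' : Fin m) (h : (j' : ℕ) = (j : ℕ) + 1) : RArc Cl (.z j) (.y j')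
  | zf (j : Fin m) (h : (j : ℕ) = m - 1) : RArc Cl (.z j) (.w (Fin.last n))
  | yu (j : Fin m) (t : Fin 3) : RArc Cl (.y j) (.u j t (Cl j t).2)
  | vz (j : Fin m) (t : Fin 3) : RArc Cl (.v j t (Cl j t).2) (.z j)

/-- Arc costs: the lobe-structure arcs `w→u`, `v→u`, `v→w` cost 1; all other
arcs (segments, clause chain and connectors) cost 0. -/
def rcost {n m : ℕ} : RNode n m × RNode n m → ℕ
  | (.w _, .u _ _ _) => 1
  | (.v _ _ _, .u _ _ _) => 1
  | (.v _ _ _, .w _) => 1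
  | _ => 0

/-- The arcs traversed by a path given as a list of nodes. -/
def pathArcs {n m : ℕ} (L : List (RNode n m)) : List (RNode n m × RNode n m) :=
  L.zip L.tail

def rPathCost {n m : ℕ} (L : List (RNode n m)) : ℕ :=
  ((pathArcs L).map rcost).sum

/-- A simple directed path from `s = w 0` to `f = w n`. -/
def IsSFPath {n m : ℕ} (Cl : Fin m → Fin 3 → Fin n × Bool)
    (L : List (RNode n m)) : Prop :=
  List.Chain' (RArc Cl) L ∧ L.head? = some (.w 0) ∧
    L.getLast? = some (.w (Fin.last n)) ∧ L.Nodup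

/-- converse direction of Theorem 1: in the reduction graph,
suppose `L1` is an s-f path of cost `3m + n` traversing one side of every lobe
(`σ i` being the side used in lobe `i`, so every occurrence segment of
variable `i` on side `σ i` lies on `L1`), and `L2` is an arc-disjoint s-f path
of cost `0`.  Then the assignment `τ(x_i) = true` iff `L1` traverses the lower
part of lobe `i` — i.e. `τ i = !(σ i)` — satisfies every clause of `F`; hence
`F` is satisfiable. -/

lemma mem_zip_tail {α} {L : List α} {x y : α} (h : (x, y) ∈ L.zip L.tail) :
    ∃ k, ∃ hk : k + 1 < L.length, L[k] = x ∧ L[k+1] = y := by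
  obtain ⟨k, hk, hxy⟩ := List.mem_iff_getElem.1 h
  have hlen : k + 1 < L.length := by
    simp [List.length_zip, List.length_tail] at hk; omega
  refine ⟨k, hlen, ?_, ?_⟩
  · have := List.getElem_zip (l := L) (l' := L.tail) (i := k) (h := hk)
    rw [this] at hxy
    exact congrArg Prod.fst hxy
  · have := List.getElem_zip (l := L) (l' := L.tail) (i := k) (h := hk)
    rw [this] at hxy
    have h2 := congrArg Prod.snd hxy
    simp at h2
    simpa using h2

lemma zip_tail_mem {α} {L : List α} {k : ℕ} (hk : k + 1 < L.length) :
    (L[k], L[k+1]) ∈ L.zip L.tail := by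
  have hk' : k < (L.zip L.tail).length := by
    simp [List.length_zip, List.length_tail]; omega
  have := List.getElem_zip (l := L) (l' := L.tail) (i := k) (h := hk')
  rw [List.getElem_tail] at this
  exact this ▸ List.getElem_mem hk'

lemma exists_next {α} {L : List α} {a b : α}
    (ha : a ∈ L) (hb : L.getLast? = some b) (hne : a ≠ b) :
    ∃ c, (a, c) ∈ L.zip L.tail := by
  obtain ⟨k, hk, hka⟩ := List.mem_iff_getElem.1 ha
  rcases Nat.lt_or_ge (k + 1) L.length with h | h
  · exact ⟨L[k+1], hka ▸ zip_tail_mem h⟩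
  · exfalso
    have hkk : k = L.length - 1 := by omega
    have hkk : k = L.length - 1 := by omega
    subst hkk
    have : L.getLast? = some a := by
      rw [List.getLast?_eq_getElem?, List.getElem?_eq_getElem (by omega : L.length - 1 < L.length)]
      exact congrArg some hka
    rw [hb] at this
    exact hne (Option.some_injective _ this).symm

lemma arc_rel {α} {R : α → α → Prop} {L : List α} (hc : L.Chain' R) {x y : α}
    (h : (x, y) ∈ L.zip L.tail) : R x y ∧ y ∈ L := by
  obtain ⟨k, hk, hx, hy⟩ := mem_zip_tail h
  refine ⟨?_, ?_⟩
  · have := List.isChain_iff_getElem.1 hc k (by omega)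
    rwa [hx, hy] at this
  · exact hy ▸ List.getElem_mem hk

theorem stmt15 (n m : ℕ) (hm : 0 < m)
    (Cl : Fin m → Fin 3 → Fin n × Bool)
    (hocc : ∀ i : Fin n, ∃ j t, (Cl j t).1 = i)
    (L1 L2 : List (RNode n m)) (σ : Fin n → Bool)
    (hL1 : IsSFPath Cl L1) (hL2 : IsSFPath Cl L2)
    (hdisj : (pathArcs L1).Disjoint (pathArcs L2))
    (hc1 : rPathCost L1 = 3 * m + n) (hc2 : rPathCost L2 = 0)
    (hside : ∀ (j : Fin m) (t : Fin 3),
      (RNode.u j t (σ (Cl j t).1), RNode.v j t (σ (Cl j t).1)) ∈ pathArcs L1) :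
    ∀ j : Fin m, ∃ t : Fin 3, (Cl j t).2 = !(σ (Cl j t).1) := by
  intro j
  obtain ⟨hchain, hhead, hlast, -⟩ := hL2
  have hz : ∀ p ∈ pathArcs L2, rcost p = 0 := by
    intro p hp
    exact List.sum_eq_zero_iff.1 hc2 _ (List.mem_map_of_mem (f := rcost) hp)
  have hnext : ∀ a ∈ L2, a ≠ RNode.w (Fin.last n) →
      ∃ c, RArc Cl a c ∧ (a, c) ∈ pathArcs L2 ∧ c ∈ L2 ∧ rcost (a, c) = 0 := by
    intro a ha hne
    obtain ⟨c, hc⟩ := exists_next ha hlast hne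
    obtain ⟨hr, hcm⟩ := arc_rel hchain hc
    exact ⟨c, hr, hc, hcm, hz _ hc⟩
  -- main step: from y k in L2, get the occurrence arc in L2 and z k in L2
  have main : ∀ (jj : Fin m), (RNode.y jj : RNode n m) ∈ L2 →
      (∃ t, (RNode.u jj t (Cl jj t).2, RNode.v jj t (Cl jj t).2) ∈ pathArcs L2)
      ∧ (RNode.z jj : RNode n m) ∈ L2 := by
    intro jj hyj
    obtain ⟨c, hr, hcp, hcm, hcost⟩ := hnext _ hyj (fun h => nomatch h)
    cases hr with
    | yu _ t =>
      obtain ⟨c2, hr2, hcp2, hcm2, hcost2⟩ := hnext _ hcm (fun h => nomatch h)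
      cases hr2 with
      | seg =>
        obtain ⟨c3, hr3, hcp3, hcm3, hcost3⟩ := hnext _ hcm2 (fun h => nomatch h)
        cases hr3 with
        | chain => simp [rcost] at hcost3
        | exits => simp [rcost] at hcost3
        | vz => exact ⟨⟨t, hcp2⟩, hcm3⟩
  -- y 0 is on L2
  have hw0 : (RNode.w 0 : RNode n m) ∈ L2 := List.mem_of_mem_head? (hhead ▸ rfl)
  have hn : 0 < n := by
    rcases Nat.eq_zero_or_pos n with h | h
    · subst h; exact ((Cl j 0).1).elim0
    · exact h
  have hkey : ∀ k (hk : k < m), (RNode.y (⟨k, hk⟩ : Fin m) : RNode n m) ∈ L2 := by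
    intro k
    induction k with
    | zero =>
      intro hk
      obtain ⟨c, hr, hcp, hcm, hcost⟩ := hnext _ hw0 (by
        intro h
        have h2 : (0 : Fin (n+1)) = Fin.last n := by injection h
        have := congrArg Fin.val h2
        simp [Fin.last] at this
        omega)
      have hws : ∃ j0 : Fin m, (j0 : ℕ) = 0 ∧ c = RNode.y j0 := by
        generalize hw : (RNode.w 0 : RNode n m) = a at hr
        cases hr with
        | entry => simp [rcost] at hcost
        | sy j0 hj0 => exact ⟨j0, hj0, rfl⟩
        | seg => simp at hw
        | chain => simp at hw
        | exits => simp at hw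
        | zy => simp at hw
        | zf => simp at hw
        | yu => simp at hw
        | vz => simp at hw
      obtain ⟨j0, hj0, rfl⟩ := hws
      have : j0 = ⟨0, hk⟩ := Fin.ext (by simpa using hj0)
      rwa [this] at hcm
    | succ k ih =>
      intro hk
      have hyk := ih (by omega)
      have hzk := (main _ hyk).2
      obtain ⟨c, hr, hcp, hcm, hcost⟩ := hnext _ hzk (fun h => nomatch h)
      cases hr with
      | zy _ j' hj' =>
        have : j' = ⟨k + 1, hk⟩ := Fin.ext (by simpa using hj')
        rwa [this] at hcm
      | zf _ hmf =>
        exfalso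
        simp at hmf
        omega
  have hyj : (RNode.y j : RNode n m) ∈ L2 := by
    have := hkey j.val j.isLt
    simpa using this
  obtain ⟨⟨t, harc⟩, -⟩ := main j hyj
  refine ⟨t, ?_⟩
  rw [Bool.eq_not_iff]
  intro heq
  have h1 := hside j t
  rw [← heq] at h1
  exact hdisj h1 harc
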